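/- Square root monotonicity bound: if A and B are symmetric positive definite q×q matrices with A^{1/2} + B^{1/2} ≥ 2 R^{1/2} in the Loewner order for a symmetric positive definite R, then ‖A^{1/2} - B^{1/2}‖ ≤ (1/2)‖R^{-1/2}‖ ‖A - B‖. In particular, for A = R + H P Hᵀ and B = R + H Q Hᵀ with P, Q symmetric positive semidefinite, ‖A^{1/2} - B^{1/2}‖ ≤ (1/2)‖R^{-1/2}‖‖H‖² ‖P - Q‖. -/

import Mathlib

open Matrix
open scoped Matrix.Norms.L2Operator InnerProductSpace

open scoped ComplexOrder in
/-- The square root of a positive semidefinite matrix (the definition removed from Mathlib,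
restored with its old meaning). -/
noncomputable def Matrix.PosSemidef.sqrt {n : Type*} {𝕜 : Type*} [Fintype n] [RCLike 𝕜]
    [DecidableEq n] {A : Matrix n n 𝕜} (hA : Matrix.PosSemidef A) : Matrix n n 𝕜 :=
  hA.1.eigenvectorUnitary.1 * diagonal ((↑) ∘ (√·) ∘ hA.1.eigenvalues) *
  (star hA.1.eigenvectorUnitary : Matrix n n 𝕜)

lemma Matrix.PosSemidef.posSemidef_sqrt {n : Type*} [Fintype n] [DecidableEq n]
    {A : Matrix n n ℝ} (hA : A.PosSemidef) : hA.sqrt.PosSemidef := by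
  unfold Matrix.PosSemidef.sqrt
  have hD : (diagonal ((↑) ∘ (√·) ∘ hA.1.eigenvalues) : Matrix n n ℝ).PosSemidef := by
    rw [posSemidef_diagonal_iff]; intro i; simp [Real.sqrt_nonneg]
  exact hD.mul_mul_conjTranspose_same (hA.1.eigenvectorUnitary : Matrix n n ℝ)

lemma Matrix.PosSemidef.sqrt_mul_self {n : Type*} [Fintype n] [DecidableEq n]
    {A : Matrix n n ℝ} (hA : A.PosSemidef) : hA.sqrt * hA.sqrt = A := by
  unfold Matrix.PosSemidef.sqrt
  have hU : (star hA.1.eigenvectorUnitary : Matrix n n ℝ) * hA.1.eigenvectorUnitary = 1 :=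
    Unitary.coe_star_mul_self _
  have hDD : (diagonal ((↑) ∘ (√·) ∘ hA.1.eigenvalues) : Matrix n n ℝ) *
      diagonal ((↑) ∘ (√·) ∘ hA.1.eigenvalues) = diagonal (RCLike.ofReal ∘ hA.1.eigenvalues) := by
    rw [diagonal_mul_diagonal]; congr 1; funext i
    simp [Real.mul_self_sqrt (hA.eigenvalues_nonneg i)]
  conv_rhs => rw [hA.1.spectral_theorem, Unitary.conjStarAlgAut_apply]
  rw [← hDD]
  simp only [Matrix.mul_assoc]
  rw [← Matrix.mul_assoc (star _ : Matrix n n ℝ) (hA.1.eigenvectorUnitary : Matrix n n ℝ), hU,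
    Matrix.one_mul]
  rfl

namespace StmtAux

variable {q : ℕ}

lemma inner_eq_dot (x y : EuclideanSpace ℝ (Fin q)) :
    ⟪x, y⟫_ℝ = (x : Fin q → ℝ) ⬝ᵥ (y : Fin q → ℝ) := by
  simp [PiLp.inner_apply, dotProduct, RCLike.inner_apply, mul_comm]

lemma dot_mulVec_symm {D : Matrix (Fin q) (Fin q) ℝ} (hD : D.IsHermitian)
    (u v : Fin q → ℝ) : (D *ᵥ u) ⬝ᵥ v = u ⬝ᵥ (D *ᵥ v) := by
  rw [dotProduct_mulVec u D v, ← vecMul_transpose]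
  have : Dᵀ = D := hD
  rw [this, dotProduct_comm]

lemma abs_dot_le (x y : EuclideanSpace ℝ (Fin q)) :
    |(x : Fin q → ℝ) ⬝ᵥ (y : Fin q → ℝ)| ≤ ‖x‖ * ‖y‖ := by
  rw [← inner_eq_dot]; exact abs_real_inner_le_norm x y

lemma dot_self_eq_one (x : EuclideanSpace ℝ (Fin q)) (hx : ‖x‖ = 1) :
    (x : Fin q → ℝ) ⬝ᵥ (x : Fin q → ℝ) = 1 := by
  rw [← inner_eq_dot, real_inner_self_eq_norm_sq, hx, one_pow]

lemma norm_sq_eq_dot (x : EuclideanSpace ℝ (Fin q)) :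
    ‖x‖ ^ 2 = (x : Fin q → ℝ) ⬝ᵥ (x : Fin q → ℝ) := by
  rw [← inner_eq_dot, real_inner_self_eq_norm_sq]

/-- abs of quadratic form is bounded by opnorm, for unit vectors -/
lemma abs_quad_le (D : Matrix (Fin q) (Fin q) ℝ) (x : EuclideanSpace ℝ (Fin q))
    (hx : ‖x‖ = 1) : |(x : Fin q → ℝ) ⬝ᵥ (D *ᵥ x)| ≤ ‖D‖ := by
  have h1 : |(x : Fin q → ℝ) ⬝ᵥ (D *ᵥ x)| ≤
      ‖x‖ * ‖(WithLp.equiv 2 (Fin q → ℝ)).symm (D *ᵥ x)‖ :=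
    abs_dot_le x ((WithLp.equiv 2 (Fin q → ℝ)).symm (D *ᵥ x))
  have h2 := D.l2_opNorm_mulVec x
  rw [hx, one_mul] at h1
  refine h1.trans ?_
  have := h2
  rw [hx, mul_one] at this
  simpa using this

lemma psd_quad_nonneg {S : Matrix (Fin q) (Fin q) ℝ} (hS : S.PosSemidef)
    (x : Fin q → ℝ) : 0 ≤ x ⬝ᵥ (S *ᵥ x) := by
  simpa using hS.dotProduct_mulVec_nonneg x

/-- Lower bound for the quadratic form of a PSD invertible matrix on unit vectors. -/
lemma quad_lower {N : Matrix (Fin q) (Fin q) ℝ} (hN : N.PosSemidef)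
    (hdet : IsUnit N.det) (x : EuclideanSpace ℝ (Fin q)) (hx : ‖x‖ = 1)
    (hc : 0 < ‖N⁻¹‖) :
    1 / ‖N⁻¹‖ ≤ (x : Fin q → ℝ) ⬝ᵥ (N *ᵥ x) := by
  set K := hN.sqrt with hKdef
  have hK : K.PosSemidef := hN.posSemidef_sqrt
  have hKH : K.IsHermitian := hK.1
  have hKK : K * K = N := hN.sqrt_mul_self
  have hdetK : IsUnit K.det := by
    have : IsUnit (K.det * K.det) := by
      rw [← det_mul, hKK]; exact hdet
    exact isUnit_of_mul_isUnit_left this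
  have hNinv : N⁻¹ = K⁻¹ * K⁻¹ := by rw [← hKK, Matrix.mul_inv_rev]
  have hKinvH : K⁻¹.IsHermitian := hKH.inv
  have hKx : K *ᵥ (K⁻¹ *ᵥ (x : Fin q → ℝ)) = x := by
    rw [mulVec_mulVec, Matrix.mul_nonsing_inv K hdetK, one_mulVec]
  have e1 : (1 : ℝ) = (K *ᵥ (x : Fin q → ℝ)) ⬝ᵥ (K⁻¹ *ᵥ (x : Fin q → ℝ)) := by
    rw [dot_mulVec_symm hKH, hKx, dot_self_eq_one x hx]
  set u : EuclideanSpace ℝ (Fin q) := (WithLp.equiv 2 (Fin q → ℝ)).symm (K *ᵥ x) with hu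
  set v : EuclideanSpace ℝ (Fin q) := (WithLp.equiv 2 (Fin q → ℝ)).symm (K⁻¹ *ᵥ x) with hv
  have eu : ‖u‖ ^ 2 = (x : Fin q → ℝ) ⬝ᵥ (N *ᵥ x) := by
    rw [norm_sq_eq_dot]
    show (K *ᵥ (x : Fin q → ℝ)) ⬝ᵥ (K *ᵥ (x : Fin q → ℝ)) = _
    rw [dot_mulVec_symm hKH, mulVec_mulVec, hKK]
  have ev : ‖v‖ ^ 2 = (x : Fin q → ℝ) ⬝ᵥ (N⁻¹ *ᵥ x) := by
    rw [norm_sq_eq_dot]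
    show (K⁻¹ *ᵥ (x : Fin q → ℝ)) ⬝ᵥ (K⁻¹ *ᵥ (x : Fin q → ℝ)) = _
    rw [dot_mulVec_symm hKinvH, mulVec_mulVec, ← hNinv]
  have hvN : ‖v‖ ^ 2 ≤ ‖N⁻¹‖ := by
    rw [ev]
    calc (x : Fin q → ℝ) ⬝ᵥ (N⁻¹ *ᵥ x) ≤ |(x : Fin q → ℝ) ⬝ᵥ (N⁻¹ *ᵥ x)| := le_abs_self _
    _ ≤ ‖N⁻¹‖ := abs_quad_le N⁻¹ x hx
  have hCS : (1 : ℝ) ≤ ‖u‖ * ‖v‖ := by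
    rw [e1]
    calc (K *ᵥ (x : Fin q → ℝ)) ⬝ᵥ (K⁻¹ *ᵥ (x : Fin q → ℝ))
        ≤ |(K *ᵥ (x : Fin q → ℝ)) ⬝ᵥ (K⁻¹ *ᵥ (x : Fin q → ℝ))| := le_abs_self _
      _ ≤ ‖u‖ * ‖v‖ := abs_dot_le u v
  have h1 : (1 : ℝ) ≤ ‖u‖ ^ 2 * ‖v‖ ^ 2 := by
    nlinarith [norm_nonneg u, norm_nonneg v]
  have h2 : (1 : ℝ) ≤ ((x : Fin q → ℝ) ⬝ᵥ (N *ᵥ x)) * ‖N⁻¹‖ := by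
    calc (1:ℝ) ≤ ‖u‖ ^ 2 * ‖v‖ ^ 2 := h1
    _ ≤ ‖u‖ ^ 2 * ‖N⁻¹‖ := by nlinarith [sq_nonneg ‖u‖]
    _ = _ := by rw [eu]
  rw [div_le_iff₀ hc]
  linarith


/-- L2 operator norm of a Hermitian real matrix is bounded by a bound on (abs of) eigenvalues. -/
lemma opNorm_le_of_eigenvalues {D : Matrix (Fin q) (Fin q) ℝ} (hD : D.IsHermitian)
    {M : ℝ} (hM : 0 ≤ M) (h : ∀ i, |hD.eigenvalues i| ≤ M) : ‖D‖ ≤ M := by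
  rw [Matrix.l2_opNorm_def]
  refine ContinuousLinearMap.opNorm_le_bound _ hM fun x => ?_
  set b := hD.eigenvectorBasis with hb
  set y : EuclideanSpace ℝ (Fin q) := (LinearEquiv.trans toEuclideanLin
      LinearMap.toContinuousLinearMap D) x with hy
  have hyx : (y : Fin q → ℝ) = D *ᵥ (x : Fin q → ℝ) := rfl
  -- repr of y in eigenbasis
  have hrepr : ∀ i, b.repr y i = hD.eigenvalues i * b.repr x i := by
    intro i
    rw [OrthonormalBasis.repr_apply_apply, OrthonormalBasis.repr_apply_apply]
    rw [inner_eq_dot, inner_eq_dot, hyx]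
    rw [← dot_mulVec_symm hD]
    rw [show D *ᵥ (b i : Fin q → ℝ) = hD.eigenvalues i • (b i : Fin q → ℝ) from
      hD.mulVec_eigenvectorBasis i]
    show (hD.eigenvalues i • b i : Fin q → ℝ) ⬝ᵥ (x : Fin q → ℝ) = _
    simp [dotProduct, PiLp.smul_apply, smul_eq_mul, Finset.mul_sum, mul_assoc]
  -- compare norms via repr
  have h1 : ‖y‖ = ‖b.repr y‖ := (b.repr.norm_map y).symm
  have h2 : ‖x‖ = ‖b.repr x‖ := (b.repr.norm_map x).symm
  rw [h1, h2]
  rw [EuclideanSpace.norm_eq, EuclideanSpace.norm_eq]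
  rw [← Real.sqrt_sq hM, ← Real.sqrt_mul (by positivity)]
  apply Real.sqrt_le_sqrt
  rw [Finset.mul_sum]
  apply Finset.sum_le_sum
  intro i _
  rw [hrepr i]
  have e1 : ‖hD.eigenvalues i * b.repr x i‖ ^ 2 =
      (hD.eigenvalues i)^2 * ‖b.repr x i‖^2 := by
    rw [norm_mul, mul_pow, Real.norm_eq_abs, sq_abs]
  rw [e1]
  have h2i := h i
  have hsq : hD.eigenvalues i ^ 2 ≤ M ^ 2 := by
    nlinarith [sq_abs (hD.eigenvalues i), abs_nonneg (hD.eigenvalues i)]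
  nlinarith [sq_nonneg ‖b.repr x i‖, hsq]


lemma inv_norm_pos [Nonempty (Fin q)] {N : Matrix (Fin q) (Fin q) ℝ}
    (hdet : IsUnit N.det) : 0 < ‖N⁻¹‖ := by
  rw [norm_pos_iff]
  intro h0
  have h1 : N * N⁻¹ = 1 := Matrix.mul_nonsing_inv N hdet
  rw [h0, mul_zero] at h1
  exact one_ne_zero h1.symm

lemma quad_factor {S T : Matrix (Fin q) (Fin q) ℝ} (hD : (S - T).IsHermitian)
    {μ : ℝ} {x : Fin q → ℝ} (hxe : (S - T) *ᵥ x = μ • x) :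
    x ⬝ᵥ ((S * S - T * T) *ᵥ x) = μ * (x ⬝ᵥ (S *ᵥ x) + x ⬝ᵥ (T *ᵥ x)) := by
  have hAB : S * S - T * T = S * (S - T) + (S - T) * T := by noncomm_ring
  rw [hAB, add_mulVec, dotProduct_add, ← mulVec_mulVec, ← mulVec_mulVec, hxe,
    mulVec_smul, dotProduct_smul, ← dot_mulVec_symm hD, hxe, smul_dotProduct]
  simp [smul_eq_mul]
  ring

/-- Core estimate. -/
lemma key {A B Rm : Matrix (Fin q) (Fin q) ℝ} (hR : Rm.PosDef) (hA : A.PosDef)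
    (hB : B.PosDef)
    (h : (hA.posSemidef.sqrt + hB.posSemidef.sqrt -
        (2 : ℝ) • hR.posSemidef.sqrt).PosSemidef) :
    ‖hA.posSemidef.sqrt - hB.posSemidef.sqrt‖ ≤
      (1 / 2) * ‖(hR.posSemidef.sqrt)⁻¹‖ * ‖A - B‖ := by
  set S := hA.posSemidef.sqrt with hSdef
  set T := hB.posSemidef.sqrt with hTdef
  set N := hR.posSemidef.sqrt with hNdef
  have hSH : S.IsHermitian := hA.posSemidef.posSemidef_sqrt.1
  have hTH : T.IsHermitian := hB.posSemidef.posSemidef_sqrt.1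
  have hSS : S * S = A := hA.posSemidef.sqrt_mul_self
  have hTT : T * T = B := hB.posSemidef.sqrt_mul_self
  have hNN : N * N = Rm := hR.posSemidef.sqrt_mul_self
  have hSpsd : S.PosSemidef := hA.posSemidef.posSemidef_sqrt
  have hTpsd : T.PosSemidef := hB.posSemidef.posSemidef_sqrt
  have hNpsd : N.PosSemidef := hR.posSemidef.posSemidef_sqrt
  have hDH : (S - T).IsHermitian := hSH.sub hTH
  rcases isEmpty_or_nonempty (Fin q) with he | he
  · have h0 : S - T = 0 := Subsingleton.elim _ _
    rw [h0, norm_zero]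
    positivity
  · have hdetR : IsUnit Rm.det := isUnit_iff_ne_zero.mpr (ne_of_gt hR.det_pos)
    have hdetN : IsUnit N.det := by
      refine isUnit_of_mul_isUnit_left (x := N.det) (y := N.det) ?_
      rw [← det_mul, hNN]; exact hdetR
    have hc : 0 < ‖N⁻¹‖ := inv_norm_pos hdetN
    obtain ⟨i, -, hi⟩ := Finset.univ.exists_max_image
      (fun j => |hDH.eigenvalues j|) Finset.univ_nonempty
    set μ := hDH.eigenvalues i with hμdef
    set x : EuclideanSpace ℝ (Fin q) := hDH.eigenvectorBasis i with hxdef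
    have hx : ‖x‖ = 1 := hDH.eigenvectorBasis.orthonormal.1 i
    have hxe : (S - T) *ᵥ (x : Fin q → ℝ) = μ • (x : Fin q → ℝ) :=
      hDH.mulVec_eigenvectorBasis i
    have hnorm : ‖S - T‖ ≤ |μ| :=
      opNorm_le_of_eigenvalues hDH (abs_nonneg μ)
        (fun j => hi j (Finset.mem_univ j))
    -- quadratic form identities
    have hquad : (x : Fin q → ℝ) ⬝ᵥ ((A - B) *ᵥ x) =
        μ * ((x : Fin q → ℝ) ⬝ᵥ (S *ᵥ x) + (x : Fin q → ℝ) ⬝ᵥ (T *ᵥ x)) := by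
      rw [← hSS, ← hTT]
      exact quad_factor hDH hxe
    have hNx : 1 / ‖N⁻¹‖ ≤ (x : Fin q → ℝ) ⬝ᵥ (N *ᵥ x) :=
      quad_lower hNpsd hdetN x hx hc
    have hpsd := psd_quad_nonneg h (x : Fin q → ℝ)
    rw [sub_mulVec, add_mulVec, dotProduct_sub, dotProduct_add,
      smul_mulVec, dotProduct_smul, smul_eq_mul] at hpsd
    set mS := (x : Fin q → ℝ) ⬝ᵥ (S *ᵥ x) with hmS
    set mT := (x : Fin q → ℝ) ⬝ᵥ (T *ᵥ x) with hmT
    have hm : 2 / ‖N⁻¹‖ ≤ mS + mT := by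
      have : 2 * (1 / ‖N⁻¹‖) ≤ 2 * ((x : Fin q → ℝ) ⬝ᵥ (N *ᵥ x)) := by linarith
      calc 2 / ‖N⁻¹‖ = 2 * (1 / ‖N⁻¹‖) := by ring
        _ ≤ 2 * ((x : Fin q → ℝ) ⬝ᵥ (N *ᵥ x)) := this
        _ ≤ mS + mT := by linarith
    have habs : |(x : Fin q → ℝ) ⬝ᵥ ((A - B) *ᵥ x)| ≤ ‖A - B‖ :=
      abs_quad_le (A - B) x hx
    have hmpos : 0 < mS + mT := lt_of_lt_of_le (by positivity) hm
    have h5 : |μ| * (2 / ‖N⁻¹‖) ≤ ‖A - B‖ := by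
      have e1 : |μ| * (mS + mT) = |(x : Fin q → ℝ) ⬝ᵥ ((A - B) *ᵥ x)| := by
        rw [hquad, abs_mul, abs_of_pos hmpos]
      have e2 : |μ| * (2 / ‖N⁻¹‖) ≤ |μ| * (mS + mT) :=
        mul_le_mul_of_nonneg_left hm (abs_nonneg μ)
      calc |μ| * (2 / ‖N⁻¹‖) ≤ |μ| * (mS + mT) := e2
        _ = _ := e1
        _ ≤ ‖A - B‖ := habs
    have h6 := mul_le_mul_of_nonneg_right h5 (le_of_lt (half_pos hc))
    have h7 : |μ| * (2 / ‖N⁻¹‖) * (‖N⁻¹‖ / 2) = |μ| := by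
      have hgen : ∀ c : ℝ, c ≠ 0 → |μ| * (2 / c) * (c / 2) = |μ| := by
        intro c hc0; field_simp
      exact hgen _ (ne_of_gt hc)
    rw [h7] at h6
    calc ‖S - T‖ ≤ |μ| := hnorm
      _ ≤ ‖A - B‖ * (‖N⁻¹‖ / 2) := h6
      _ = (1 / 2) * ‖N⁻¹‖ * ‖A - B‖ := by ring

/-- Loewner monotonicity of the matrix square root (in the form needed here). -/
lemma sqrt_loewner {A Rm : Matrix (Fin q) (Fin q) ℝ} (hR : Rm.PosDef)
    (hA : A.PosDef) (hAR : (A - Rm).PosSemidef) :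
    (hA.posSemidef.sqrt - hR.posSemidef.sqrt).PosSemidef := by
  set S := hA.posSemidef.sqrt with hSdef
  set N := hR.posSemidef.sqrt with hNdef
  have hSH : S.IsHermitian := hA.posSemidef.posSemidef_sqrt.1
  have hNH : N.IsHermitian := hR.posSemidef.posSemidef_sqrt.1
  have hSS : S * S = A := hA.posSemidef.sqrt_mul_self
  have hNN : N * N = Rm := hR.posSemidef.sqrt_mul_self
  have hSpsd : S.PosSemidef := hA.posSemidef.posSemidef_sqrt
  have hNpsd : N.PosSemidef := hR.posSemidef.posSemidef_sqrt
  have hDH : (S - N).IsHermitian := hSH.sub hNH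
  apply hDH.posSemidef_iff_eigenvalues_nonneg.mpr
  intro i
  have : Nonempty (Fin q) := ⟨i⟩
  have hdetR : IsUnit Rm.det := isUnit_iff_ne_zero.mpr (ne_of_gt hR.det_pos)
  have hdetN : IsUnit N.det := by
    refine isUnit_of_mul_isUnit_left (x := N.det) (y := N.det) ?_
    rw [← det_mul, hNN]; exact hdetR
  have hc : 0 < ‖N⁻¹‖ := inv_norm_pos hdetN
  set μ := hDH.eigenvalues i with hμdef
  set x : EuclideanSpace ℝ (Fin q) := hDH.eigenvectorBasis i with hxdef
  have hx : ‖x‖ = 1 := hDH.eigenvectorBasis.orthonormal.1 i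
  have hxe : (S - N) *ᵥ (x : Fin q → ℝ) = μ • (x : Fin q → ℝ) :=
    hDH.mulVec_eigenvectorBasis i
  have hquad : (x : Fin q → ℝ) ⬝ᵥ ((A - Rm) *ᵥ x) =
      μ * ((x : Fin q → ℝ) ⬝ᵥ (S *ᵥ x) + (x : Fin q → ℝ) ⬝ᵥ (N *ᵥ x)) := by
    rw [← hSS, ← hNN]
    exact quad_factor hDH hxe
  have hpsd := psd_quad_nonneg hAR (x : Fin q → ℝ)
  have hSnn := psd_quad_nonneg hSpsd (x : Fin q → ℝ)
  have hNx : 1 / ‖N⁻¹‖ ≤ (x : Fin q → ℝ) ⬝ᵥ (N *ᵥ x) :=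
    quad_lower hNpsd hdetN x hx hc
  have hmpos : 0 < (x : Fin q → ℝ) ⬝ᵥ (S *ᵥ x) + (x : Fin q → ℝ) ⬝ᵥ (N *ᵥ x) := by
    have : 0 < 1 / ‖N⁻¹‖ := by positivity
    linarith
  rw [hquad] at hpsd
  by_contra hlt
  push_neg at hlt
  rw [Pi.zero_apply] at hlt
  nlinarith

end StmtAux

open StmtAux in
/-- Square root monotonicity bound: if `A^{1/2} + B^{1/2} ≥ 2 R^{1/2}` in the Loewner
order, then `‖A^{1/2} - B^{1/2}‖ ≤ (1/2) ‖R^{-1/2}‖ ‖A - B‖`; in particular, for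
`A = R + H P Hᵀ` and `B = R + H Q Hᵀ` with `P, Q` positive semidefinite,
`‖A^{1/2} - B^{1/2}‖ ≤ (1/2) ‖R^{-1/2}‖ ‖H‖² ‖P - Q‖`. -/
theorem stmt_15 {d q : ℕ} (R : Matrix (Fin q) (Fin q) ℝ) (hR : R.PosDef) :
    (∀ (A B : Matrix (Fin q) (Fin q) ℝ) (hA : A.PosDef) (hB : B.PosDef),
        (hA.posSemidef.sqrt + hB.posSemidef.sqrt -
            (2 : ℝ) • hR.posSemidef.sqrt).PosSemidef →
        ‖hA.posSemidef.sqrt - hB.posSemidef.sqrt‖ ≤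
          (1 / 2) * ‖(hR.posSemidef.sqrt)⁻¹‖ * ‖A - B‖) ∧
      ∀ (H : Matrix (Fin q) (Fin d) ℝ) (P Q : Matrix (Fin d) (Fin d) ℝ),
        P.PosSemidef → Q.PosSemidef →
        ∀ (hA : (R + H * P * Hᵀ).PosDef) (hB : (R + H * Q * Hᵀ).PosDef),
        ‖hA.posSemidef.sqrt - hB.posSemidef.sqrt‖ ≤
          (1 / 2) * ‖(hR.posSemidef.sqrt)⁻¹‖ * ‖H‖ ^ 2 * ‖P - Q‖ := by
  constructor
  · exact fun A B hA hB h => key hR hA hB h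
  · intro H P Q hP hQ hA hB
    have hHt : Hᴴ = Hᵀ := conjTranspose_eq_transpose_of_trivial H
    have h1 : (R + H * P * Hᵀ - R).PosSemidef := by
      rw [add_sub_cancel_left]
      have := hP.mul_mul_conjTranspose_same H
      rwa [hHt] at this
    have h2 : (R + H * Q * Hᵀ - R).PosSemidef := by
      rw [add_sub_cancel_left]
      have := hQ.mul_mul_conjTranspose_same H
      rwa [hHt] at this
    have m1 := sqrt_loewner hR hA h1
    have m2 := sqrt_loewner hR hB h2
    have hsum : (hA.posSemidef.sqrt + hB.posSemidef.sqrt -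
        (2 : ℝ) • hR.posSemidef.sqrt).PosSemidef := by
      have := m1.add m2
      have e : hA.posSemidef.sqrt + hB.posSemidef.sqrt -
          (2 : ℝ) • hR.posSemidef.sqrt =
          (hA.posSemidef.sqrt - hR.posSemidef.sqrt) +
          (hB.posSemidef.sqrt - hR.posSemidef.sqrt) := by
        rw [two_smul]; abel
      rwa [e]
    have hkey := key hR hA hB hsum
    have hABeq : (R + H * P * Hᵀ) - (R + H * Q * Hᵀ) = H * (P - Q) * Hᵀ := by
      rw [Matrix.mul_sub, Matrix.sub_mul]; abel
    have hnorm : ‖(R + H * P * Hᵀ) - (R + H * Q * Hᵀ)‖ ≤ ‖H‖ * ‖P - Q‖ * ‖H‖ := by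
      rw [hABeq]
      calc ‖H * (P - Q) * Hᵀ‖ ≤ ‖H * (P - Q)‖ * ‖Hᵀ‖ := l2_opNorm_mul _ _
        _ ≤ ‖H‖ * ‖P - Q‖ * ‖Hᵀ‖ :=
          mul_le_mul_of_nonneg_right (l2_opNorm_mul H (P - Q)) (norm_nonneg _)
        _ = ‖H‖ * ‖P - Q‖ * ‖H‖ := by
          rw [← hHt, l2_opNorm_conjTranspose]
    have hc0 : (0:ℝ) ≤ (1 / 2) * ‖(hR.posSemidef.sqrt)⁻¹‖ := by positivity
    calc ‖hA.posSemidef.sqrt - hB.posSemidef.sqrt‖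
        ≤ (1 / 2) * ‖(hR.posSemidef.sqrt)⁻¹‖ *
          ‖(R + H * P * Hᵀ) - (R + H * Q * Hᵀ)‖ := hkey
      _ ≤ (1 / 2) * ‖(hR.posSemidef.sqrt)⁻¹‖ * (‖H‖ * ‖P - Q‖ * ‖H‖) :=
          mul_le_mul_of_nonneg_left hnorm hc0
      _ = (1 / 2) * ‖(hR.posSemidef.sqrt)⁻¹‖ * ‖H‖ ^ 2 * ‖P - Q‖ := by ring
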